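/- For any balanced lattice design X ∈ U(n, q^s) with n ≥ 2 and every j ∈ {2, …, s}: B_j²(X) ≥ (n(n−1)/q^j)(C(θ, j) + f·C(θ, j−1)) − C(s, j)(n²/q^{2j} − n/q^j), where β̄ = s(n−q)/(q(n−1)), θ = ⌊β̄⌋, f = β̄ − θ, and B_j²(X) = q^{−j} Ψ_C(X; j). -/

import Mathlib

open Finset

/-- The coincidence number β(x, w) = #{j : x_j = w_j} of two lattice points. -/
def coincidence {s q : ℕ} (x w : Fin s → Fin q) : ℕ :=
  (univ.filter fun j => x j = w j).card

/-- A design `X ∈ U(n, q^s)` is balanced: `q ∣ n` and every level occurs exactly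
`n / q` times in each column. -/
def IsBalanced {n s q : ℕ} (X : Fin n → Fin s → Fin q) : Prop :=
  q ∣ n ∧ ∀ (j : Fin s) (ℓ : Fin q),
    (univ.filter fun i => X i j = ℓ).card = n / q

/-- The index set of pairs 1 ≤ i < k ≤ n. -/
def pairs (n : ℕ) : Finset (Fin n × Fin n) := univ.filter fun p => p.1 < p.2

/-- The Schur-combinatorial criterion
Ψ_C(X; j) = 2 ∑_{i<k} C(β(x_i,x_k), j) − C(s,j)(n²/qʲ − n). -/
noncomputable def PsiC {n s q : ℕ} (X : Fin n → Fin s → Fin q) (j : ℕ) : ℝ :=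
  2 * ∑ p ∈ pairs n, ((coincidence (X p.1) (X p.2)).choose j : ℝ)
    - (s.choose j : ℝ) * ((n : ℝ) ^ 2 / (q : ℝ) ^ j - n)

/- ### Auxiliary lemmas -/

lemma choose_up_aux (j a d : ℕ) :
    a.choose (j+1) + d * a.choose j ≤ (a+d).choose (j+1) := by
  induction d with
  | zero => simp
  | succ d ih =>
    have h1 : (a + (d+1)).choose (j+1) = (a+d).choose j + (a+d).choose (j+1) := by
      rw [show a + (d+1) = (a+d)+1 by ring, Nat.choose_succ_succ]
    have h2 : a.choose j ≤ (a+d).choose j := Nat.choose_le_choose _ (Nat.le_add_right a d)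
    have : a.choose (j+1) + (d+1) * a.choose j
        = (a.choose (j+1) + d * a.choose j) + a.choose j := by ring
    omega

lemma choose_down_aux (j a d : ℕ) :
    (a+d).choose (j+1) ≤ a.choose (j+1) + d * (a+d).choose j := by
  induction d with
  | zero => simp
  | succ d ih =>
    have h1 : (a + (d+1)).choose (j+1) = (a+d).choose j + (a+d).choose (j+1) := by
      rw [show a + (d+1) = (a+d)+1 by ring, Nat.choose_succ_succ]
    have h2 : (a+d).choose j ≤ (a+(d+1)).choose j := Nat.choose_le_choose _ (by omega)
    have h3 : d * (a+d).choose j ≤ d * (a+(d+1)).choose j := Nat.mul_le_mul_left _ h2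
    have : a.choose (j+1) + (d+1) * (a+(d+1)).choose j
        = a.choose (j+1) + d * (a+(d+1)).choose j + (a+(d+1)).choose j := by ring
    omega

/-- The tangent-line lower bound for binomial coefficients. -/
lemma choose_tangent_aux (j θ m : ℕ) :
    (θ.choose (j+1) : ℝ) + ((m:ℝ) - θ) * θ.choose j ≤ (m.choose (j+1) : ℝ) := by
  rcases le_or_gt θ m with h | h
  · obtain ⟨d, rfl⟩ := Nat.exists_eq_add_of_le h
    have h1 := choose_up_aux j θ d
    have h2 : (θ.choose (j+1) : ℝ) + d * θ.choose j ≤ ((θ+d).choose (j+1) : ℝ) := by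
      exact_mod_cast h1
    push_cast
    linarith
  · obtain ⟨d, rfl⟩ := Nat.exists_eq_add_of_le h.le
    have h1 := choose_down_aux j m d
    have h2 : ((m+d).choose (j+1) : ℝ) ≤ (m.choose (j+1) : ℝ) + d * (m+d).choose j := by
      exact_mod_cast h1
    push_cast
    linarith

lemma coincidence_comm_aux {s q : ℕ} (x w : Fin s → Fin q) :
    coincidence x w = coincidence w x := by
  unfold coincidence; congr 1; ext j; simp [eq_comm]

lemma coincidence_self_aux {s q : ℕ} (x : Fin s → Fin q) : coincidence x x = s := by
  simp [coincidence]

lemma pairs_card_swap_aux (n : ℕ) : (pairs n).card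
    = ((univ : Finset (Fin n × Fin n)).filter fun p => p.2 < p.1).card := by
  refine card_bij (fun p _ => p.swap) ?_ ?_ ?_
  · intro p hp
    simp only [pairs, mem_filter, mem_univ, true_and] at hp ⊢
    exact hp
  · intro p _ p' _ h
    exact Prod.swap_injective h
  · intro p hp
    simp only [mem_filter, mem_univ, true_and] at hp
    exact ⟨p.swap, by simp only [pairs, mem_filter, mem_univ, true_and, Prod.fst_swap,
      Prod.snd_swap]; exact hp, by simp⟩

lemma disj_lt_gt_aux (n : ℕ) : Disjoint (pairs n)
    ((univ : Finset (Fin n × Fin n)).filter fun p => p.2 < p.1) := by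
  rw [Finset.disjoint_left]
  intro p hp1 hp2
  simp only [pairs, mem_filter, mem_univ, true_and] at hp1 hp2
  exact absurd hp2 (lt_asymm hp1)

lemma union_lt_gt_aux (n : ℕ) :
    pairs n ∪ ((univ : Finset (Fin n × Fin n)).filter fun p => p.2 < p.1)
      = (univ : Finset (Fin n)).offDiag := by
  ext p
  rw [Finset.mem_offDiag]
  simp only [pairs, mem_union, mem_filter, mem_univ, true_and]
  exact lt_or_lt_iff_ne

lemma two_card_pairs_aux (n : ℕ) : 2 * (pairs n).card = n * n - n := by
  have hcard := congrArg Finset.card (union_lt_gt_aux n)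
  rw [Finset.card_union_of_disjoint (disj_lt_gt_aux n), Finset.offDiag_card,
    ← pairs_card_swap_aux] at hcard
  simp only [Finset.card_univ, Fintype.card_fin] at hcard
  omega

lemma sum_pairs_eq_aux (n s q : ℕ) (X : Fin n → Fin s → Fin q) :
    2 * ∑ p ∈ pairs n, coincidence (X p.1) (X p.2) + n * s
      = ∑ i : Fin n, ∑ k : Fin n, coincidence (X i) (X k) := by
  classical
  have htot : ∑ i : Fin n, ∑ k : Fin n, coincidence (X i) (X k)
      = ∑ p ∈ (univ : Finset (Fin n × Fin n)), coincidence (X p.1) (X p.2) := by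
    rw [← Finset.sum_product']
    simp
  have hgt : ∑ p ∈ ((univ : Finset (Fin n × Fin n)).filter fun p => p.2 < p.1),
      coincidence (X p.1) (X p.2) = ∑ p ∈ pairs n, coincidence (X p.1) (X p.2) := by
    refine Finset.sum_nbij' (fun p => p.swap) (fun p => p.swap) ?_ ?_ (by simp) (by simp) ?_
    · intro p hp
      simp only [pairs, mem_filter, mem_univ, true_and] at hp ⊢
      exact hp
    · intro p hp
      simp only [pairs, mem_filter, mem_univ, true_and] at hp ⊢
      exact hp
    · intro p hp
      exact coincidence_comm_aux _ _
  have hoff : ∑ p ∈ (univ : Finset (Fin n)).offDiag, coincidence (X p.1) (X p.2)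
      = 2 * ∑ p ∈ pairs n, coincidence (X p.1) (X p.2) := by
    rw [← union_lt_gt_aux, Finset.sum_union (disj_lt_gt_aux n), hgt]
    ring
  have hdiagsum : ∑ p ∈ (univ : Finset (Fin n)).diag, coincidence (X p.1) (X p.2)
      = n * s := by
    rw [show ∑ p ∈ (univ : Finset (Fin n)).diag, coincidence (X p.1) (X p.2)
        = ∑ i : Fin n, coincidence (X i) (X i) from ?_]
    · simp [coincidence_self_aux, Finset.sum_const, mul_comm]
    refine Finset.sum_nbij' (fun p => p.1) (fun i => (i, i)) ?_ ?_ ?_ ?_ ?_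
    · intro p _; exact mem_univ _
    · intro i _; rw [Finset.mem_diag]; exact ⟨mem_univ _, rfl⟩
    · intro p hp
      rw [Finset.mem_diag] at hp
      exact Prod.ext rfl hp.2
    · intro i _; rfl
    · intro p hp
      rw [Finset.mem_diag] at hp
      rw [← hp.2]
  have hu : (univ : Finset (Fin n × Fin n))
      = (univ : Finset (Fin n)).diag ∪ (univ : Finset (Fin n)).offDiag := by
    rw [Finset.diag_union_offDiag]
    exact Finset.univ_product_univ.symm
  rw [htot, hu, Finset.sum_union (Finset.disjoint_diag_offDiag _), hoff, hdiagsum]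
  ring

lemma total_sum_aux (n s q : ℕ) (X : Fin n → Fin s → Fin q) (hX : IsBalanced X) :
    ∑ i : Fin n, ∑ k : Fin n, coincidence (X i) (X k) = s * (n * (n / q)) := by
  classical
  have hco : ∀ i k : Fin n, coincidence (X i) (X k)
      = ∑ col : Fin s, if X i col = X k col then 1 else 0 := by
    intro i k
    rw [coincidence, Finset.card_filter]
  have hinner : ∀ (col : Fin s) (i : Fin n),
      (∑ k : Fin n, if X i col = X k col then 1 else 0) = n / q := by
    intro col i
    rw [← Finset.card_filter]
    rw [show (univ.filter fun k => X i col = X k col)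
        = (univ.filter fun k => X k col = X i col) from by
      ext k; simp [eq_comm]]
    exact hX.2 col (X i col)
  calc ∑ i : Fin n, ∑ k : Fin n, coincidence (X i) (X k)
      = ∑ i : Fin n, ∑ col : Fin s, ∑ k : Fin n,
          (if X i col = X k col then 1 else 0) := by
        refine Finset.sum_congr rfl fun i _ => ?_
        rw [← Finset.sum_comm]
        exact Finset.sum_congr rfl fun k _ => hco i k
    _ = ∑ col : Fin s, ∑ i : Fin n, ∑ k : Fin n,
          (if X i col = X k col then 1 else 0) := Finset.sum_comm
    _ = ∑ col : Fin s, ∑ i : Fin n, (n / q) := by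
        refine Finset.sum_congr rfl fun col _ => Finset.sum_congr rfl fun i _ => hinner col i
    _ = s * (n * (n / q)) := by simp [Finset.sum_const, mul_comm]

/-- Theorem 3 (benchmark for the deviation pattern): for a balanced design and
2 ≤ j ≤ s, B_j²(X) = q^{−j} Ψ_C(X; j) is bounded below by
(n(n−1)/qʲ)(C(θ,j) + f C(θ,j−1)) − C(s,j)(n²/q^{2j} − n/qʲ). -/
theorem deviation_lower_bound (n s q : ℕ) (hq : 2 ≤ q) (hn : 2 ≤ n)
    (X : Fin n → Fin s → Fin q) (hX : IsBalanced X)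
    (j : ℕ) (hj1 : 2 ≤ j) (hjs : j ≤ s)
    (βbar : ℝ) (hβbar : βbar = (s : ℝ) * ((n : ℝ) - q) / ((q : ℝ) * ((n : ℝ) - 1)))
    (θ : ℕ) (hθ : θ = ⌊βbar⌋₊)
    (f : ℝ) (hf : f = βbar - θ) :
    PsiC X j / (q : ℝ) ^ j ≥
      (n : ℝ) * ((n : ℝ) - 1) / (q : ℝ) ^ j *
          ((θ.choose j : ℝ) + f * (θ.choose (j - 1) : ℝ))
        - (s.choose j : ℝ) * ((n : ℝ) ^ 2 / (q : ℝ) ^ (2 * j) - (n : ℝ) / (q : ℝ) ^ j) := by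
  obtain ⟨hdvd, hbal⟩ := hX
  have hq2 : (2:ℝ) ≤ (q:ℝ) := by exact_mod_cast hq
  have hn2 : (2:ℝ) ≤ (n:ℝ) := by exact_mod_cast hn
  have hq0 : (0:ℝ) < q := by linarith
  have hc : (0:ℝ) < (q:ℝ)^j := pow_pos hq0 j
  have hn1 : ((n:ℝ) - 1) ≠ 0 := by linarith
  -- sum of coincidences over pairs
  set c1 : ℝ := (θ.choose j : ℝ) with hc1
  set c2 : ℝ := (θ.choose (j-1) : ℝ) with hc2
  set Sβ : ℝ := ∑ p ∈ pairs n, ((coincidence (X p.1) (X p.2)) : ℝ) with hSβ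
  set N : ℝ := ((pairs n).card : ℝ) with hN
  have hSnat : 2 * ∑ p ∈ pairs n, coincidence (X p.1) (X p.2) + n * s
      = s * (n * (n / q)) := by
    rw [sum_pairs_eq_aux]; exact total_sum_aux n s q X ⟨hdvd, hbal⟩
  have hcastdiv : ((n / q : ℕ) : ℝ) = (n:ℝ)/(q:ℝ) := Nat.cast_div hdvd (ne_of_gt hq0)
  have hSr : 2 * Sβ + (n:ℝ) * s = (s:ℝ) * ((n:ℝ) * ((n:ℝ)/(q:ℝ))) := by
    have h := congrArg (fun m : ℕ => (m:ℝ)) hSnat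
    push_cast [hcastdiv] at h
    rw [hSβ]
    convert h using 2
  have hS2 : 2 * Sβ = (n:ℝ) * ((n:ℝ) - 1) * βbar := by
    rw [hβbar]
    field_simp at hSr ⊢
    nlinarith [hSr]
  have hNr : 2 * N = (n:ℝ) * (n:ℝ) - (n:ℝ) := by
    have h := two_card_pairs_aux n
    have hle : n ≤ n * n := Nat.le_mul_of_pos_left n (by omega)
    have h2 : ((2 * (pairs n).card : ℕ) : ℝ) = ((n * n - n : ℕ) : ℝ) := by
      exact_mod_cast congrArg (fun m : ℕ => (m:ℝ)) h
    rw [Nat.cast_sub hle] at h2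
    push_cast at h2
    rw [hN]
    convert h2 using 2
  -- the tangent bound applied to every pair
  have htan : ∀ p ∈ pairs n,
      c1 + (((coincidence (X p.1) (X p.2)) : ℝ) - θ) * c2
        ≤ ((coincidence (X p.1) (X p.2)).choose j : ℝ) := by
    intro p _
    have h := choose_tangent_aux (j-1) θ (coincidence (X p.1) (X p.2))
    rwa [show j - 1 + 1 = j from by omega] at h
  have hsum := Finset.sum_le_sum htan
  have hlhs : ∑ p ∈ pairs n, (c1 + (((coincidence (X p.1) (X p.2)) : ℝ) - θ) * c2)
      = N * c1 + (Sβ - N * θ) * c2 := by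
    rw [Finset.sum_add_distrib, Finset.sum_const, nsmul_eq_mul]
    rw [← Finset.sum_mul, Finset.sum_sub_distrib, Finset.sum_const, nsmul_eq_mul]
  rw [hlhs] at hsum
  -- the key inequality
  have hkey : (n:ℝ) * ((n:ℝ) - 1) * (c1 + f * c2)
      ≤ 2 * ∑ p ∈ pairs n, ((coincidence (X p.1) (X p.2)).choose j : ℝ) := by
    have heq : (n:ℝ) * ((n:ℝ) - 1) * (c1 + f * c2)
        = 2 * (N * c1 + (Sβ - N * θ) * c2) := by
      rw [hf]
      linear_combination (-c1 + (θ:ℝ) * c2) * hNr + (-c2) * hS2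
    rw [heq]
    linarith [hsum]
  -- rewrite the goal as a single division and conclude
  rw [ge_iff_le, show (n : ℝ) * ((n : ℝ) - 1) / (q : ℝ) ^ j * (c1 + f * c2)
        - (s.choose j : ℝ) * ((n : ℝ) ^ 2 / (q : ℝ) ^ (2 * j) - (n : ℝ) / (q : ℝ) ^ j)
      = ((n:ℝ) * ((n:ℝ) - 1) * (c1 + f * c2)
          - (s.choose j : ℝ) * ((n : ℝ) ^ 2 / (q : ℝ) ^ j - (n:ℝ))) / (q : ℝ) ^ j from by
    rw [two_mul, pow_add]
    field_simp]
  show _ ≤ PsiC X j / (q:ℝ)^j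
  rw [PsiC]
  gcongr
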